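/- Let R' be a commutative ring, P a unit of R', M an R'-module, and u₁, u₂, u₃ pairwise commuting R'-linear endomorphisms of M satisfying the vertex relations u₁ + u₂ + u₃ = 0, u₁u₂ + u₂u₃ + u₃u₁ = P•id_M, and u₁u₂u₃ = 0. Then the endomorphisms π₁ = P⁻¹ • (u₂ ∘ u₃), π₂ = P⁻¹ • (u₃ ∘ u₁), π₃ = P⁻¹ • (u₁ ∘ u₂) are idempotent, pairwise orthogonal (π_i ∘ π_j = 0 for i ≠ j), and satisfy π₁ + π₂ + π₃ = id_M. -/

import Mathlib

set_option maxHeartbeats 1000000 in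
theorem vertexAux' {A : Type*} [CommRing A] (a b c p : A)
    (hq : a * b + b * c + c * a = p) (h0 : a * b * c = 0) :
    (b*c)*(b*c) = p*(b*c) ∧ (c*a)*(c*a) = p*(c*a) ∧ (a*b)*(a*b) = p*(a*b) ∧
    (b*c)*(c*a) = 0 ∧ (c*a)*(b*c) = 0 ∧ (b*c)*(a*b) = 0 ∧ (a*b)*(b*c) = 0 ∧
    (c*a)*(a*b) = 0 ∧ (a*b)*(c*a) = 0 := by
  refine ⟨?_, ?_, ?_, ?_, ?_, ?_, ?_, ?_, ?_⟩
  · linear_combination (b*c) * hq - (b+c) * h0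
  · linear_combination (c*a) * hq - (c+a) * h0
  · linear_combination (a*b) * hq - (a+b) * h0
  · linear_combination c * h0
  · linear_combination c * h0
  · linear_combination b * h0
  · linear_combination b * h0
  · linear_combination a * h0
  · linear_combination a * h0


set_option maxHeartbeats 1000000 in
set_option synthInstance.maxHeartbeats 400000 in
/-- If `u₁, u₂, u₃` are pairwise commuting endomorphisms satisfying
the vertex relations with a unit `P`, then `π₁ = P⁻¹ • (u₂ ∘ u₃)`,
`π₂ = P⁻¹ • (u₃ ∘ u₁)`, `π₃ = P⁻¹ • (u₁ ∘ u₂)` are pairwise orthogonal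
idempotents summing to the identity. -/
theorem stmt3 {R M : Type*} [CommRing R] [AddCommGroup M] [Module R M]
    (P : R) (hP : IsUnit P) (u₁ u₂ u₃ : M →ₗ[R] M)
    (hc12 : u₁ ∘ₗ u₂ = u₂ ∘ₗ u₁) (hc13 : u₁ ∘ₗ u₃ = u₃ ∘ₗ u₁)
    (hc23 : u₂ ∘ₗ u₃ = u₃ ∘ₗ u₂)
    (hsum : u₁ + u₂ + u₃ = 0)
    (hquad : u₁ ∘ₗ u₂ + u₂ ∘ₗ u₃ + u₃ ∘ₗ u₁ = P • (LinearMap.id : M →ₗ[R] M))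
    (hcube : u₁ ∘ₗ u₂ ∘ₗ u₃ = 0)
    (π₁ π₂ π₃ : M →ₗ[R] M)
    (hπ₁ : π₁ = (↑hP.unit⁻¹ : R) • (u₂ ∘ₗ u₃))
    (hπ₂ : π₂ = (↑hP.unit⁻¹ : R) • (u₃ ∘ₗ u₁))
    (hπ₃ : π₃ = (↑hP.unit⁻¹ : R) • (u₁ ∘ₗ u₂)) :
    (π₁ ∘ₗ π₁ = π₁ ∧ π₂ ∘ₗ π₂ = π₂ ∧ π₃ ∘ₗ π₃ = π₃) ∧
    (π₁ ∘ₗ π₂ = 0 ∧ π₂ ∘ₗ π₁ = 0 ∧ π₁ ∘ₗ π₃ = 0 ∧ π₃ ∘ₗ π₁ = 0 ∧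
      π₂ ∘ₗ π₃ = 0 ∧ π₃ ∘ₗ π₂ = 0) ∧
    π₁ + π₂ + π₃ = LinearMap.id := by
  have hcomm : ∀ x ∈ ({u₁, u₂, u₃} : Set (Module.End R M)),
      ∀ y ∈ ({u₁, u₂, u₃} : Set (Module.End R M)), x * y = y * x := by
    intro x hx y hy
    simp only [Set.mem_insert_iff, Set.mem_singleton_iff] at hx hy
    rcases hx with rfl|rfl|rfl <;> rcases hy with rfl|rfl|rfl <;>
      simp_all [Module.End.mul_eq_comp]
  letI : CommRing (Algebra.adjoin R ({u₁, u₂, u₃} : Set (Module.End R M))) :=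
    Algebra.adjoinCommRingOfComm R hcomm
  have m1 : u₁ ∈ Algebra.adjoin R ({u₁, u₂, u₃} : Set (Module.End R M)) :=
    Algebra.subset_adjoin (by simp)
  have m2 : u₂ ∈ Algebra.adjoin R ({u₁, u₂, u₃} : Set (Module.End R M)) :=
    Algebra.subset_adjoin (by simp)
  have m3 : u₃ ∈ Algebra.adjoin R ({u₁, u₂, u₃} : Set (Module.End R M)) :=
    Algebra.subset_adjoin (by simp)
  have hq : (⟨u₁,m1⟩ * ⟨u₂,m2⟩ + ⟨u₂,m2⟩ * ⟨u₃,m3⟩ + ⟨u₃,m3⟩ * ⟨u₁,m1⟩ :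
      Algebra.adjoin R ({u₁, u₂, u₃} : Set (Module.End R M))) =
      P • 1 :=
    Subtype.ext (show u₁ * u₂ + u₂ * u₃ + u₃ * u₁ = P • (1 : Module.End R M) from hquad)
  have h0 : (⟨u₁,m1⟩ * ⟨u₂,m2⟩ * ⟨u₃,m3⟩ :
      Algebra.adjoin R ({u₁, u₂, u₃} : Set (Module.End R M))) = 0 :=
    Subtype.ext (show u₁ * u₂ * u₃ = 0 from by
      simpa [Module.End.mul_eq_comp, mul_assoc, LinearMap.comp_assoc] using hcube)
  obtain ⟨k1, k2, k3, o1, o2, o3, o4, o5, o6⟩ :=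
    vertexAux' (⟨u₁,m1⟩ : Algebra.adjoin R ({u₁, u₂, u₃} : Set (Module.End R M)))
      ⟨u₂,m2⟩ ⟨u₃,m3⟩ (P • 1) hq h0
  have K1 : (u₂*u₃)*(u₂*u₃) = P • (u₂*u₃) := by
    have := congrArg Subtype.val k1
    simpa [smul_mul_assoc] using this
  have K2 : (u₃*u₁)*(u₃*u₁) = P • (u₃*u₁) := by
    have := congrArg Subtype.val k2
    simpa [smul_mul_assoc] using this
  have K3 : (u₁*u₂)*(u₁*u₂) = P • (u₁*u₂) := by
    have := congrArg Subtype.val k3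
    simpa [smul_mul_assoc] using this
  have O1 : (u₂*u₃)*(u₃*u₁) = 0 := congrArg Subtype.val o1
  have O2 : (u₃*u₁)*(u₂*u₃) = 0 := congrArg Subtype.val o2
  have O3 : (u₂*u₃)*(u₁*u₂) = 0 := congrArg Subtype.val o3
  have O4 : (u₁*u₂)*(u₂*u₃) = 0 := congrArg Subtype.val o4
  have O5 : (u₃*u₁)*(u₁*u₂) = 0 := congrArg Subtype.val o5
  have O6 : (u₁*u₂)*(u₃*u₁) = 0 := congrArg Subtype.val o6
  have hQP : (↑hP.unit⁻¹ : R) * P = 1 := by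
    have := hP.unit.inv_mul
    rwa [IsUnit.unit_spec] at this
  set Q : R := (↑hP.unit⁻¹ : R) with hQ
  have key : ∀ f : Module.End R M, f * f = P • f → (Q • f) * (Q • f) = Q • f := by
    intro f hf
    rw [smul_mul_assoc, mul_smul_comm, hf, smul_smul, smul_smul, mul_assoc, hQP, mul_one]
  have keyO : ∀ f g : Module.End R M, f * g = 0 → (Q • f) * (Q • g) = 0 := by
    intro f g hfg
    rw [smul_mul_assoc, mul_smul_comm, hfg, smul_zero, smul_zero]
  refine ⟨⟨?_, ?_, ?_⟩, ⟨?_, ?_, ?_, ?_, ?_, ?_⟩, ?_⟩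
  · simpa [hπ₁, ← Module.End.mul_eq_comp] using key _ K1
  · simpa [hπ₂, ← Module.End.mul_eq_comp] using key _ K2
  · simpa [hπ₃, ← Module.End.mul_eq_comp] using key _ K3
  · simpa [hπ₁, hπ₂, ← Module.End.mul_eq_comp] using keyO _ _ O1
  · simpa [hπ₁, hπ₂, ← Module.End.mul_eq_comp] using keyO _ _ O2
  · simpa [hπ₁, hπ₃, ← Module.End.mul_eq_comp] using keyO _ _ O3
  · simpa [hπ₁, hπ₃, ← Module.End.mul_eq_comp] using keyO _ _ O4
  · simpa [hπ₂, hπ₃, ← Module.End.mul_eq_comp] using keyO _ _ O5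
  · simpa [hπ₂, hπ₃, ← Module.End.mul_eq_comp] using keyO _ _ O6
  · rw [hπ₁, hπ₂, hπ₃, ← smul_add, ← smul_add]
    have hsum' : u₂ ∘ₗ u₃ + u₃ ∘ₗ u₁ + u₁ ∘ₗ u₂ = P • (LinearMap.id : M →ₗ[R] M) := by
      rw [← hquad]; abel
    rw [hsum', smul_smul, hQP, one_smul]
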